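/- Let P be a partition of the vertices of a graph G such that each part induces a connected subgraph, and suppose |P| ≥ h where h = n(n+1) + d for the graph G of Eppstein's construction (with the middle set M being an independent set of size n, no universal vertices in the underlying graph G'). If G/P is a complete graph, then no part of P is a singleton subset of M. -/

import Mathlib

variable {V W : Type*}

/-- Contraction of a graph by a partition (setoid): two classes are adjacent
iff they are distinct and joined by an edge of `G`. -/
def contractQ (G : SimpleGraph V) (s : Setoid V) : SimpleGraph (Quotient s) where
  Adj x y := x ≠ y ∧ ∃ a b : V, Quotient.mk s a = x ∧ Quotient.mk s b = y ∧ G.Adj a b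
  symm := by
    constructor
    rintro x y ⟨hne, a, b, ha, hb, hab⟩
    exact ⟨hne.symm, b, a, hb, ha, hab.symm⟩
  loopless := by
    constructor
    rintro x ⟨hne, -⟩
    exact hne rfl

/-- The partition of the vertices induced by contracting a set `F` of edges of `G`. -/
def edgeSetoid (G : SimpleGraph V) (F : Set (Sym2 V)) : Setoid V :=
  Relation.EqvGen.setoid (fun a b => G.Adj a b ∧ s(a, b) ∈ F)

/-- The graph `G/F` obtained from `G` by contracting the edges in `F`. -/
def contractE (G : SimpleGraph V) (F : Set (Sym2 V)) :
    SimpleGraph (Quotient (edgeSetoid G F)) := contractQ G (edgeSetoid G F)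

/-- `G` contains an induced copy of `H`. -/
def HasInducedCopy (H : SimpleGraph W) (G : SimpleGraph V) : Prop :=
  ∃ f : W ↪ V, ∀ a b : W, H.Adj a b ↔ G.Adj (f a) (f b)

/-- `G` can be turned into an `H`-free graph by contracting at most `k` of its edges. -/
def ContractsToFree (G : SimpleGraph V) (k : ℕ) (H : SimpleGraph W) : Prop :=
  ∃ F : Finset (Sym2 V), ↑F ⊆ G.edgeSet ∧ F.card ≤ k ∧
    ¬ HasInducedCopy H (contractE G (↑F : Set (Sym2 V)))

/-- The cost of the partition given by a setoid: the sum over classes of (size - 1). -/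
noncomputable def setoidCost (s : Setoid V) : ℕ :=
  ∑ᶠ c : Quotient s, ({v : V | Quotient.mk s v = c}.ncard - 1)

/-- Vertex set of Eppstein's construction: upper clique `U = Fin d`, middle independent
set `M = Fin n`, lower clique `L = Fin n × Fin (n+1)` (split into cliques `L_j`). -/
abbrev EppV (n d : ℕ) := Fin d ⊕ (Fin n ⊕ (Fin n × Fin (n + 1)))

/-- Eppstein's construction from a graph `G'` on `Fin n`: `U` is a clique complete to the
independent set `M`; `L` is a clique; `m_i` is complete to `L_j` iff `v_i` dominates
`v_j`; there are no `U`–`L` edges. -/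
def eppstein {n : ℕ} (G' : SimpleGraph (Fin n)) (d : ℕ) : SimpleGraph (EppV n d) :=
  SimpleGraph.fromRel (fun x y =>
    match x, y with
    | Sum.inl _, Sum.inl _ => True
    | Sum.inl _, Sum.inr (Sum.inl _) => True
    | Sum.inr (Sum.inl i), Sum.inr (Sum.inr (j, _)) => i = j ∨ G'.Adj i j
    | Sum.inr (Sum.inr _), Sum.inr (Sum.inr _) => True
    | _, _ => False)

/-- decoder used to prove injectivity of the encoding of neighbors of `m_i`. -/
def eppDecodeNbr {n d : ℕ} (j0 : Fin n) :
    Fin d ⊕ ({j : Fin n // j ≠ j0} × Fin (n + 1)) → EppV n d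
  | Sum.inl u => Sum.inl u
  | Sum.inr (j, k) => Sum.inr (Sum.inr (j.1, k))

/-- encoding of neighbors of `m_i` into a small type. -/
def eppEncodeNbr {n d : ℕ} (G' : SimpleGraph (Fin n)) (i j0 : Fin n)
    (hmid : ∀ j : Fin n, ¬ (eppstein G' d).Adj (Sum.inr (Sum.inl j)) (Sum.inr (Sum.inl i)))
    (hlow : ∀ (j : Fin n) (k : Fin (n + 1)),
      (eppstein G' d).Adj (Sum.inr (Sum.inr (j, k))) (Sum.inr (Sum.inl i)) → j ≠ j0) :
    {v : EppV n d // (eppstein G' d).Adj v (Sum.inr (Sum.inl i))} →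
      Fin d ⊕ ({j : Fin n // j ≠ j0} × Fin (n + 1))
  | ⟨Sum.inl u, _⟩ => Sum.inl u
  | ⟨Sum.inr (Sum.inl j), h⟩ => absurd h (hmid j)
  | ⟨Sum.inr (Sum.inr (j, k)), h⟩ => Sum.inr (⟨j, hlow j k h⟩, k)

lemma eppDecode_encode {n d : ℕ} (G' : SimpleGraph (Fin n)) (i j0 : Fin n)
    (hmid : ∀ j : Fin n, ¬ (eppstein G' d).Adj (Sum.inr (Sum.inl j)) (Sum.inr (Sum.inl i)))
    (hlow : ∀ (j : Fin n) (k : Fin (n + 1)),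
      (eppstein G' d).Adj (Sum.inr (Sum.inr (j, k))) (Sum.inr (Sum.inl i)) → j ≠ j0)
    (v : {v : EppV n d // (eppstein G' d).Adj v (Sum.inr (Sum.inl i))}) :
    eppDecodeNbr j0 (eppEncodeNbr G' i j0 hmid hlow v) = v.1 := by
  obtain ⟨(u | j | ⟨j, k⟩), h⟩ := v
  · rfl
  · exact absurd h (hmid j)
  · rfl

/-- In Eppstein's construction (from `G'` on `n ≥ 2` vertices with no
universal vertex), if `P` is a partition into connected parts with at least
`h = n(n+1) + d` parts and `G/P` is a complete graph, then no part of `P` is a singleton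
subset of the middle set `M`. -/
theorem eppstein_no_singleton_middle_part {n d : ℕ} (hn : 2 ≤ n)
    (G' : SimpleGraph (Fin n))
    (hnouniv : ∀ i : Fin n, ∃ j : Fin n, j ≠ i ∧ ¬ G'.Adj i j)
    (s : Setoid (EppV n d))
    (hconn : ∀ v : EppV n d, ((eppstein G' d).induce {u | s.r u v}).Connected)
    (hcard : n * (n + 1) + d ≤ Nat.card (Quotient s))
    (hcomplete : ∀ x y : Quotient s, x ≠ y → (contractQ (eppstein G' d) s).Adj x y) :
    ∀ i : Fin n, ∃ v : EppV n d,
      v ≠ Sum.inr (Sum.inl i) ∧ s.r v (Sum.inr (Sum.inl i)) := by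
  intro i
  by_contra hno
  push_neg at hno
  set mi : EppV n d := Sum.inr (Sum.inl i) with hmi
  set c : Quotient s := Quotient.mk s mi with hc
  obtain ⟨j0, hj0i, hj0adj⟩ := hnouniv i
  -- adjacency facts
  have hmid : ∀ j : Fin n, ¬ (eppstein G' d).Adj (Sum.inr (Sum.inl j)) mi := by
    intro j
    simp [eppstein, SimpleGraph.fromRel_adj, hmi]
  have hlow : ∀ (j : Fin n) (k : Fin (n + 1)),
      (eppstein G' d).Adj (Sum.inr (Sum.inr (j, k))) mi → j ≠ j0 := by
    intro j k h hjj0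
    subst hjj0
    simp [eppstein, SimpleGraph.fromRel_adj, hmi] at h
    rcases h with h | h
    · exact hj0i h.symm
    · exact hj0adj h
  -- every other class contains a neighbor of mi
  have key : ∀ x : Quotient s, x ≠ c → ∃ a : EppV n d,
      Quotient.mk s a = x ∧ (eppstein G' d).Adj a mi := by
    intro x hx
    obtain ⟨-, a, b, ha, hb, hab⟩ := hcomplete x c hx
    have hb' : s.r b mi := Quotient.exact hb
    have hbe : b = mi := by
      by_contra hbne
      exact hno b hbne hb'
    exact ⟨a, ha, hbe ▸ hab⟩
  -- embedding from other classes into neighbors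
  let F : {x : Quotient s // x ≠ c} → {v : EppV n d // (eppstein G' d).Adj v mi} :=
    fun x => ⟨(key x.1 x.2).choose, (key x.1 x.2).choose_spec.2⟩
  have hFinj : Function.Injective F := by
    intro a b hab
    have ha := (key a.1 a.2).choose_spec.1
    have hb := (key b.1 b.2).choose_spec.1
    apply Subtype.ext
    rw [← ha, ← hb]
    exact congrArg (Quotient.mk s) (congrArg Subtype.val hab)
  have hGinj : Function.Injective (eppEncodeNbr G' i j0 hmid hlow) := by
    intro a b hab
    apply Subtype.ext
    rw [← eppDecode_encode G' i j0 hmid hlow a, ← eppDecode_encode G' i j0 hmid hlow b, hab]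
  -- cardinality bounds
  have h1 : Nat.card {x : Quotient s // x ≠ c} ≤ d + (n - 1) * (n + 1) := by
    calc Nat.card {x : Quotient s // x ≠ c}
        ≤ Nat.card {v : EppV n d // (eppstein G' d).Adj v mi} :=
          Nat.card_le_card_of_injective F hFinj
      _ ≤ Nat.card (Fin d ⊕ ({j : Fin n // j ≠ j0} × Fin (n + 1))) :=
          Nat.card_le_card_of_injective _ hGinj
      _ = d + (n - 1) * (n + 1) := by
          rw [Nat.card_sum, Nat.card_prod]
          simp only [Nat.card_eq_fintype_card, Fintype.card_fin]
          congr 1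
          congr 1
          rw [Fintype.card_subtype_compl, Fintype.card_subtype_eq, Fintype.card_fin]
  have h2 : Nat.card (Quotient s) ≤ Nat.card {x : Quotient s // x ≠ c} + 1 := by
    classical
    haveI : Finite (Quotient s) := Quotient.finite s
    have hinj : Function.Injective (fun x : Quotient s =>
        if h : x = c then (none : Option {x : Quotient s // x ≠ c}) else some ⟨x, h⟩) := by
      intro a b hab
      dsimp only at hab
      by_cases ha : a = c <;> by_cases hb : b = c
      · exact ha.trans hb.symm
      · rw [dif_pos ha, dif_neg hb] at hab; simp at hab
      · rw [dif_neg ha, dif_pos hb] at hab; simp at hab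
      · rw [dif_neg ha, dif_neg hb] at hab
        exact congrArg Subtype.val (Option.some_injective _ hab)
    calc Nat.card (Quotient s) ≤ Nat.card (Option {x : Quotient s // x ≠ c}) :=
          Nat.card_le_card_of_injective _ hinj
      _ = Nat.card {x : Quotient s // x ≠ c} + 1 := Finite.card_option
  obtain ⟨m, rfl⟩ : ∃ m, n = m + 2 := ⟨n - 2, by omega⟩
  have h3 := hcard.trans (h2.trans (Nat.add_le_add_right h1 1))
  have h4 : (m + 2) * (m + 2 + 1) + d ≤ d + (m + 1) * (m + 2 + 1) + 1 := by
    simpa [Nat.add_sub_cancel] using h3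
  nlinarith [h4]
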